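/- (Elkan–Noto lemma.) Let (x, y, s) be random variables where y ∈ {0,1} is a binary label and s ∈ {0,1} indicates whether the example is labeled. Assume (i) only positive examples are labeled, i.e., P(y = 1 ∧ s = 1 | x) = P(s = 1 | x) (equivalently s = 1 implies y = 1), (ii) the selected-completely-at-random condition P(s = 1 | y = 1, x) = P(s = 1 | y = 1), and (iii) c := P(s = 1 | y = 1) > 0. Then for every x, P(y = 1 | x) = P(s = 1 | x)/c. -/

import Mathlib

open MeasureTheory ProbabilityTheory

/-- Elkan–Noto lemma for PU learning: if (i) only positive examples are labeled, i.e.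
`P(y = 1 ∧ s = 1 | x) = P(s = 1 | x)` (stated per `x` in cleared form), (ii) labeling is selected
completely at random, `P(s = 1 | y = 1, x) = P(s = 1 | y = 1)` (cleared form), and (iii)
`c := P(s = 1 | y = 1) > 0`, then for every `x` (with `P(x) > 0`),
`P(y = 1 | x) = P(s = 1 | x) / c`. -/
theorem elkan_noto_lemma
    {Ω X : Type*} [MeasurableSpace Ω] [MeasurableSpace X]
    (P : Measure Ω) [IsProbabilityMeasure P]
    (x : Ω → X) (y s : Ω → Bool)
    (hx : Measurable x) (hy : Measurable y) (hs : Measurable s)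
    (honly_pos : ∀ a : X,
      P (x ⁻¹' {a} ∩ {ω | y ω = true ∧ s ω = true}) = P (x ⁻¹' {a} ∩ {ω | s ω = true}))
    (hscar : ∀ a : X,
      P (x ⁻¹' {a} ∩ {ω | y ω = true ∧ s ω = true}) * P {ω | y ω = true}
        = P {ω | y ω = true ∧ s ω = true} * P (x ⁻¹' {a} ∩ {ω | y ω = true}))
    (hy_pos : 0 < P {ω | y ω = true})
    (hc_pos : 0 < P {ω | y ω = true ∧ s ω = true}) :
    ∀ a : X, 0 < P (x ⁻¹' {a}) →
      (P (x ⁻¹' {a} ∩ {ω | y ω = true})).toReal / (P (x ⁻¹' {a})).toReal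
        = ((P (x ⁻¹' {a} ∩ {ω | s ω = true})).toReal / (P (x ⁻¹' {a})).toReal)
            / ((P {ω | y ω = true ∧ s ω = true}).toReal / (P {ω | y ω = true}).toReal) := by
  intro a ha
  have hfin : ∀ t : Set Ω, P t ≠ ⊤ := fun t => measure_ne_top P t
  have key := (hscar a).symm.trans (by rw [honly_pos a])
  -- key : P(ys) * P(A∩y) = P(A∩s) * P(y)
  have keyR : (P {ω | y ω = true ∧ s ω = true}).toReal * (P (x ⁻¹' {a} ∩ {ω | y ω = true})).toReal
      = (P (x ⁻¹' {a} ∩ {ω | s ω = true})).toReal * (P {ω | y ω = true}).toReal := by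
    rw [← ENNReal.toReal_mul, ← ENNReal.toReal_mul, key]
  have hyR : (P {ω | y ω = true}).toReal ≠ 0 :=
    (ENNReal.toReal_pos hy_pos.ne' (hfin _)).ne'
  have hcR : (P {ω | y ω = true ∧ s ω = true}).toReal ≠ 0 :=
    (ENNReal.toReal_pos hc_pos.ne' (hfin _)).ne'
  have haR : (P (x ⁻¹' {a})).toReal ≠ 0 :=
    (ENNReal.toReal_pos ha.ne' (hfin _)).ne'
  field_simp
  linear_combination keyR
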